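/- Let (A,∘,[·,·]) be a Gel'fand-Dorfman bialgebra over K and V a 1-dimensional vector space with basis {x}. Then the correspondence (p,q,S,T,a1,k,η,D) ↦ (l_A, r_A, l_V, r_V, f, ∗, ◁, ▷, h, {·,·}) given by l_A(a)x = p(a)x, r_A(a)x = q(a)x, l_V(x)a = S(a), r_V(x)a = T(a), f(x,x) = a1, x∗x = kx, x◁a = η(a)x, x▷a = D(a), h = 0, {·,·} = 0, is a bijection between the set F(A) of all GD flag datums of (A,∘,[·,·]) and the set GD(A,V) of all GD extending structures of A by V. -/

import Mathlib

namespace GDExt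

def IsNovikov {M : Type*} [AddCommGroup M] (mul : M → M → M) : Prop :=
  (∀ a b c, mul (mul a b) c - mul a (mul b c) = mul (mul b a) c - mul b (mul a c)) ∧
  ∀ a b c, mul (mul a b) c = mul (mul a c) b

def IsLieBracket {M : Type*} [AddCommGroup M] (br : M → M → M) : Prop :=
  (∀ a, br a a = 0) ∧ ∀ a b c, br a (br b c) = br (br a b) c + br b (br a c)

def IsGD {M : Type*} [AddCommGroup M] (mul br : M → M → M) : Prop :=
  IsNovikov mul ∧ IsLieBracket br ∧
  ∀ a b c, br a (mul b c) - br c (mul b a) + mul (br b a) c - mul (br b c) a - mul b (br a c) = 0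

variable {K : Type*} [Field K]
variable {A V : Type*} [AddCommGroup A] [Module K A] [AddCommGroup V] [Module K V]

/-- First component bilinear product of the unified product `A ♮ V`. -/
def uniMul (circ : A →ₗ[K] A →ₗ[K] A) (lA rA : A →ₗ[K] Module.End K V)
    (lV rV : V →ₗ[K] Module.End K A) (f : V →ₗ[K] V →ₗ[K] A)
    (st : V →ₗ[K] V →ₗ[K] V) : A × V → A × V → A × V :=
  fun p q =>
    (circ p.1 q.1 + lV p.2 q.1 + rV q.2 p.1 + f p.2 q.2,
     st p.2 q.2 + lA p.1 q.2 + rA q.1 p.2)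

/-- Bracket of the unified product `A ♮ V`. -/
def uniBr (brk : A →ₗ[K] A →ₗ[K] A) (tl : V →ₗ[K] A →ₗ[K] V) (tr : V →ₗ[K] A →ₗ[K] A)
    (hm : V →ₗ[K] V →ₗ[K] A) (vbr : V →ₗ[K] V →ₗ[K] V) : A × V → A × V → A × V :=
  fun p q =>
    (brk p.1 q.1 + tr p.2 q.1 - tr q.2 p.1 + hm p.2 q.2,
     vbr p.2 q.2 + tl p.2 q.1 - tl q.2 p.1)

end GDExt

namespace GDExt

variable (K : Type*) [Field K]
variable (A V : Type*) [AddCommGroup A] [Module K A] [AddCommGroup V] [Module K V]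

/-- An extending datum of a GD bialgebra `A` by a vector space `V`. -/
structure ExtDatum where
  lA : A →ₗ[K] Module.End K V
  rA : A →ₗ[K] Module.End K V
  lV : V →ₗ[K] Module.End K A
  rV : V →ₗ[K] Module.End K A
  f : V →ₗ[K] V →ₗ[K] A
  st : V →ₗ[K] V →ₗ[K] V
  tl : V →ₗ[K] A →ₗ[K] V
  tr : V →ₗ[K] A →ₗ[K] A
  hm : V →ₗ[K] V →ₗ[K] A
  vbr : V →ₗ[K] V →ₗ[K] V

variable {K A V}

/-- The multiplication of the unified product associated to an extending datum. -/
def ExtDatum.mulMap (circ : A →ₗ[K] A →ₗ[K] A) (ω : ExtDatum K A V) : A × V → A × V → A × V :=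
  uniMul circ ω.lA ω.rA ω.lV ω.rV ω.f ω.st

/-- The bracket of the unified product associated to an extending datum. -/
def ExtDatum.brMap (brk : A →ₗ[K] A →ₗ[K] A) (ω : ExtDatum K A V) : A × V → A × V → A × V :=
  uniBr brk ω.tl ω.tr ω.hm ω.vbr

/-- Conditions (D1)-(D10) relating two extending data via a pair `(λ, μ)`. -/
def DCond (circ brk : A →ₗ[K] A →ₗ[K] A) (ω ω' : ExtDatum K A V)
    (l : V →ₗ[K] A) (m : V ≃ₗ[K] V) : Prop :=
  -- (D1)
  (∀ (a : A) (x : V), ω.rA a x = m.symm (ω'.rA a (m x))) ∧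
  -- (D2)
  (∀ (a : A) (x : V), ω.lA a x = m.symm (ω'.lA a (m x))) ∧
  -- (D3)
  (∀ (a : A) (x : V), ω.lV x a = circ (l x) a + ω'.lV (m x) a - l (m.symm (ω'.rA a (m x)))) ∧
  -- (D4)
  (∀ (a : A) (x : V), ω.rV x a = circ a (l x) + ω'.rV (m x) a - l (m.symm (ω'.lA a (m x)))) ∧
  -- (D5)
  (∀ x y : V, ω.st x y = m.symm (ω'.st (m x) (m y)) + m.symm (ω'.lA (l x) (m y))
      + m.symm (ω'.rA (l y) (m x))) ∧
  -- (D6)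
  (∀ x y : V, ω.f x y = circ (l x) (l y) + ω'.lV (m x) (l y) + ω'.rV (m y) (l x)
      + ω'.f (m x) (m y) - l (m.symm (ω'.st (m x) (m y))) - l (m.symm (ω'.lA (l x) (m y)))
      - l (m.symm (ω'.rA (l y) (m x)))) ∧
  -- (D7)
  (∀ (a : A) (x : V), ω.tl x a = m.symm (ω'.tl (m x) a)) ∧
  -- (D8)
  (∀ (a : A) (x : V), ω.tr x a = brk (l x) a + ω'.tr (m x) a - l (m.symm (ω'.tl (m x) a))) ∧
  -- (D9)
  (∀ x y : V, ω.hm x y = brk (l x) (l y) + ω'.tr (m x) (l y) - ω'.tr (m y) (l x)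
      + ω'.hm (m x) (m y) - l (m.symm (ω'.vbr (m x) (m y))) - l (m.symm (ω'.tl (m x) (l y)))
      + l (m.symm (ω'.tl (m y) (l x)))) ∧
  -- (D10)
  (∀ x y : V, ω.vbr x y = m.symm (ω'.vbr (m x) (m y)) + m.symm (ω'.tl (m x) (l y))
      - m.symm (ω'.tl (m y) (l x)))

/-- Two extending data are equivalent if they are related by some pair `(λ, μ)`
via conditions (D1)-(D10). -/
def DEquiv (circ brk : A →ₗ[K] A →ₗ[K] A) (ω ω' : ExtDatum K A V) : Prop :=
  ∃ (l : V →ₗ[K] A) (m : V ≃ₗ[K] V), DCond circ brk ω ω' l m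

end GDExt

namespace GDExt

variable (K : Type*) [Field K]
variable (A : Type*) [AddCommGroup A] [Module K A]

/-- The data of a Gel'fand-Dorfman flag datum. -/
structure FlagData where
  p : A →ₗ[K] K
  q : A →ₗ[K] K
  S : A →ₗ[K] A
  T : A →ₗ[K] A
  a1 : A
  k : K
  eta : A →ₗ[K] K
  D : A →ₗ[K] A

variable {K A}

/-- Conditions (FN1)-(FN10), (TD1)-(TD2) and (GF1)-(GF6) for a GD flag datum of the
GD bialgebra `(A, circ, brk)`. -/
def IsFlagDatum (circ brk : A →ₗ[K] A →ₗ[K] A) (d : FlagData K A) : Prop :=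
  -- (FN1)
  (∀ a b : A, d.p (circ a b) = d.p (circ b a)) ∧
  (∀ a b : A, d.q (circ a b) = d.q a * d.q b) ∧
  -- (FN2)
  (∀ a b : A, d.S (circ a b) = circ (d.S a) b + circ a (d.S b) + (d.q a - d.p a) • d.S b
      + d.q b • d.T a - circ (d.T a) b) ∧
  -- (FN3)
  (∀ a b : A, d.T (circ a b) - d.T (circ b a)
      = d.p b • d.T a - d.p a • d.T b + circ a (d.T b) - circ b (d.T a)) ∧
  -- (FN4)
  (∀ a : A, d.T (d.T a) = d.T (d.S a) - d.S (d.T a) + circ a d.a1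
      + (d.q a - 2 * d.p a) • d.a1 + d.k • d.T a) ∧
  -- (FN5)
  (∀ a : A, d.p (d.S a) - d.p (d.T a) = d.q (d.T a) + d.k * (d.p a - d.q a)) ∧
  -- (FN6)
  (∀ a b : A, circ (d.S a) b + d.q a • d.S b = circ (d.S b) a + d.q b • d.S a) ∧
  -- (FN7)
  (∀ a b : A, d.T (circ a b) = circ (d.T a) b + d.p a • d.S b) ∧
  -- (FN8)
  (∀ a b : A, d.p (circ a b) = d.p a * d.q b) ∧
  -- (FN9)
  (∀ a : A, d.T (d.S a) = circ d.a1 a + d.k • d.S a - d.q a • d.a1) ∧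
  -- (FN10)
  (∀ a : A, d.p (d.S a) = 0) ∧
  -- (TD1)
  (∀ a b : A, d.eta (brk a b) = 0) ∧
  -- (TD2)
  (∀ a b : A, d.D (brk a b) = brk (d.D a) b + brk a (d.D b) + d.eta a • d.D b - d.eta b • d.D a) ∧
  -- (GF1)
  (∀ a b : A, brk a (d.T b) - d.p b • d.D a - d.D (circ b a) + d.T (brk b a)
      + circ (d.D b) a + d.eta b • d.S a + circ b (d.D a) + d.eta a • d.T b = 0) ∧
  -- (GF2)
  (∀ a b : A, d.p (brk b a) + d.eta b * d.q a - d.eta (circ b a) = 0) ∧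
  -- (GF3)
  (∀ a b : A, brk a (d.S b) - d.q b • d.D a - brk b (d.S a) + d.q a • d.D b
      + circ (d.D a) b + d.eta a • d.S b - circ (d.D b) a - d.eta b • d.S a
      - d.S (brk a b) = 0) ∧
  -- (GF4)
  (∀ a b : A, d.q (brk a b) = 0) ∧
  -- (GF5)
  (∀ a : A, brk a d.a1 - d.k • d.D a - d.D (d.S a) + d.T (d.D a)
      + (2 * d.eta a) • d.a1 + d.S (d.D a) = 0) ∧
  -- (GF6)
  (∀ a : A, d.k * d.eta a - d.eta (d.S a) + d.p (d.D a) + d.q (d.D a) = 0)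

end GDExt

namespace GDExt

section Coord

variable {K : Type*} [Field K] {A : Type*} [AddCommGroup A] [Module K A]

/-- Coordinate form of the unified multiplication on `A × K`. -/
noncomputable def muC (circ : A →ₗ[K] A →ₗ[K] A) (d : FlagData K A) :
    (A × K) →ₗ[K] (A × K) →ₗ[K] (A × K) :=
  LinearMap.mk₂ K
    (fun P Q => (circ P.1 Q.1 + P.2 • d.S Q.1 + Q.2 • d.T P.1 + (P.2 * Q.2) • d.a1,
      P.2 * Q.2 * d.k + Q.2 * d.p P.1 + P.2 * d.q Q.1))
    (by rintro ⟨a, s⟩ ⟨a', s'⟩ ⟨b, t⟩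
        refine Prod.ext ?_ ?_ <;>
          simp only [map_add, map_smul, LinearMap.add_apply, Prod.fst_add, Prod.snd_add,
            Prod.mk_add_mk]
        · module
        · ring)
    (by rintro c ⟨a, s⟩ ⟨b, t⟩
        refine Prod.ext ?_ ?_ <;>
          simp only [map_smul, Prod.smul_mk, Prod.smul_fst, Prod.smul_snd, smul_eq_mul, LinearMap.smul_apply, RingHom.id_apply]
        · module
        · ring)
    (by rintro ⟨a, s⟩ ⟨b, t⟩ ⟨b', t'⟩
        refine Prod.ext ?_ ?_ <;>
          simp only [map_add, map_smul, LinearMap.add_apply, Prod.fst_add, Prod.snd_add,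
            Prod.mk_add_mk]
        · module
        · ring)
    (by rintro c ⟨a, s⟩ ⟨b, t⟩
        refine Prod.ext ?_ ?_ <;>
          simp only [map_smul, Prod.smul_mk, Prod.smul_fst, Prod.smul_snd, smul_eq_mul, LinearMap.smul_apply, RingHom.id_apply]
        · module
        · ring)

/-- Coordinate form of the unified bracket on `A × K`. -/
noncomputable def betaC (brk : A →ₗ[K] A →ₗ[K] A) (d : FlagData K A) :
    (A × K) →ₗ[K] (A × K) →ₗ[K] (A × K) :=
  LinearMap.mk₂ K
    (fun P Q => (brk P.1 Q.1 + P.2 • d.D Q.1 - Q.2 • d.D P.1,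
      P.2 * d.eta Q.1 - Q.2 * d.eta P.1))
    (by rintro ⟨a, s⟩ ⟨a', s'⟩ ⟨b, t⟩
        refine Prod.ext ?_ ?_ <;>
          simp only [map_add, map_smul, LinearMap.add_apply, Prod.fst_add, Prod.snd_add,
            Prod.mk_add_mk]
        · module
        · ring)
    (by rintro c ⟨a, s⟩ ⟨b, t⟩
        refine Prod.ext ?_ ?_ <;>
          simp only [map_smul, Prod.smul_mk, Prod.smul_fst, Prod.smul_snd, smul_eq_mul, LinearMap.smul_apply, RingHom.id_apply]
        · module
        · ring)
    (by rintro ⟨a, s⟩ ⟨b, t⟩ ⟨b', t'⟩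
        refine Prod.ext ?_ ?_ <;>
          simp only [map_add, map_smul, LinearMap.add_apply, Prod.fst_add, Prod.snd_add,
            Prod.mk_add_mk]
        · module
        · ring)
    (by rintro c ⟨a, s⟩ ⟨b, t⟩
        refine Prod.ext ?_ ?_ <;>
          simp only [map_smul, Prod.smul_mk, Prod.smul_fst, Prod.smul_snd, smul_eq_mul, LinearMap.smul_apply, RingHom.id_apply]
        · module
        · ring)

/-- A trilinear expression on `A × K` vanishes iff it vanishes on the spanning set
`{(a,0)} ∪ {(0,1)}`. -/
lemma tri_reduce {E : (A × K) → (A × K) → (A × K) → (A × K)}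
    (hP : ∀ P P' Q R, E (P + P') Q R = E P Q R + E P' Q R)
    (hPs : ∀ (s : K) P Q R, E (s • P) Q R = s • E P Q R)
    (hQ : ∀ P Q Q' R, E P (Q + Q') R = E P Q R + E P Q' R)
    (hQs : ∀ (s : K) P Q R, E P (s • Q) R = s • E P Q R)
    (hR : ∀ P Q R R', E P Q (R + R') = E P Q R + E P Q R')
    (hRs : ∀ (s : K) P Q R, E P Q (s • R) = s • E P Q R)
    (g1 : ∀ a b c : A, E (a, 0) (b, 0) (c, 0) = 0)
    (g2 : ∀ a b : A, E (a, 0) (b, 0) (0, 1) = 0)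
    (g3 : ∀ a c : A, E (a, 0) (0, 1) (c, 0) = 0)
    (g4 : ∀ a : A, E (a, 0) (0, 1) (0, 1) = 0)
    (g5 : ∀ b c : A, E (0, 1) (b, 0) (c, 0) = 0)
    (g6 : ∀ b : A, E (0, 1) (b, 0) (0, 1) = 0)
    (g7 : ∀ c : A, E (0, 1) (0, 1) (c, 0) = 0)
    (g8 : E ((0 : A), (1 : K)) (0, 1) (0, 1) = 0) :
    ∀ P Q R, E P Q R = 0 := by
  have hdec : ∀ P : A × K, P = ((P.1, 0) : A × K) + P.2 • ((0 : A), (1 : K)) := by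
    intro P
    refine Prod.ext ?_ ?_ <;> simp
  intro P Q R
  rw [hdec P, hdec Q, hdec R]
  simp only [hP, hPs, hQ, hQs, hR, hRs, g1, g2, g3, g4, g5, g6, g7, g8, smul_zero, add_zero,
    zero_add]

end Coord

end GDExt
namespace GDExt

section CoordIff

variable {K : Type*} [Field K] {A : Type*} [AddCommGroup A] [Module K A]

lemma muC_apply (circ : A →ₗ[K] A →ₗ[K] A) (d : FlagData K A) (P Q : A × K) :
    muC circ d P Q = (circ P.1 Q.1 + P.2 • d.S Q.1 + Q.2 • d.T P.1 + (P.2 * Q.2) • d.a1,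
      P.2 * Q.2 * d.k + Q.2 * d.p P.1 + P.2 * d.q Q.1) := rfl

lemma betaC_apply (brk : A →ₗ[K] A →ₗ[K] A) (d : FlagData K A) (P Q : A × K) :
    betaC brk d P Q = (brk P.1 Q.1 + P.2 • d.D Q.1 - Q.2 • d.D P.1,
      P.2 * d.eta Q.1 - Q.2 * d.eta P.1) := rfl

set_option maxHeartbeats 4000000 in
lemma coord_iff (circ brk : A →ₗ[K] A →ₗ[K] A)
    (hGD : IsGD (fun a b => circ a b) (fun a b => brk a b)) (d : FlagData K A) :
    IsGD (fun P Q => muC circ d P Q) (fun P Q => betaC brk d P Q)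
      ↔ IsFlagDatum circ brk d := by
  obtain ⟨⟨hA1, hA2⟩, ⟨hJ0, hJ⟩, hCmp⟩ := hGD
  have hA1' : ∀ a b c : A, circ (circ a b) c - circ a (circ b c)
      = circ (circ b a) c - circ b (circ a c) := hA1
  have hA2' : ∀ a b c : A, circ (circ a b) c = circ (circ a c) b := hA2
  have hJ0' : ∀ a : A, brk a a = 0 := hJ0
  have hJ' : ∀ a b c : A, brk a (brk b c) = brk (brk a b) c + brk b (brk a c) := hJ
  have hCmp' : ∀ a b c : A, brk a (circ b c) - brk c (circ b a) + circ (brk b a) c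
      - circ (brk b c) a - circ b (brk a c) = 0 := hCmp
  have hskew : ∀ u v : A, brk u v = - brk v u := by
    intro u v
    have h := hJ0' (u + v)
    simp only [map_add, LinearMap.add_apply, hJ0'] at h
    linear_combination (norm := module) h
  constructor
  · rintro ⟨⟨hN1, hN2⟩, ⟨hB0, hBJ⟩, hBC⟩
    refine ⟨?_, ?_, ?_, ?_, ?_, ?_, ?_, ?_, ?_, ?_, ?_, ?_, ?_, ?_, ?_, ?_, ?_, ?_, ?_⟩
    · -- FN1a
      intro a b
      have h := hN1 ((a, 0) : A × K) (b, 0) (0, 1)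
      simp [muC_apply] at h
      linear_combination h.2
    · -- FN1b
      intro a b
      have h := hN1 ((a, 0) : A × K) (0, 1) (b, 0)
      simp [muC_apply] at h
      linear_combination h.2
    · -- FN2
      intro a b
      have h := hN1 ((a, 0) : A × K) (0, 1) (b, 0)
      simp [muC_apply] at h
      linear_combination (norm := module) h.1
    · -- FN3
      intro a b
      have h := hN1 ((a, 0) : A × K) (b, 0) (0, 1)
      simp [muC_apply] at h
      linear_combination (norm := module) h.1
    · -- FN4
      intro a
      have h := hN1 ((a, 0) : A × K) (0, 1) (0, 1)
      simp [muC_apply] at h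
      linear_combination (norm := module) h.1
    · -- FN5
      intro a
      have h := hN1 ((a, 0) : A × K) (0, 1) (0, 1)
      simp [muC_apply] at h
      linear_combination -h.2
    · -- FN6
      intro a b
      have h := hN2 ((0 : A), (1 : K)) (a, 0) (b, 0)
      simp [muC_apply] at h
      linear_combination (norm := module) h.1
    · -- FN7
      intro a b
      have h := hN2 ((a, 0) : A × K) (b, 0) (0, 1)
      simp [muC_apply] at h
      linear_combination (norm := module) h.1
    · -- FN8
      intro a b
      have h := hN2 ((a, 0) : A × K) (b, 0) (0, 1)
      simp [muC_apply] at h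
      linear_combination h.2
    · -- FN9
      intro a
      have h := hN2 ((0 : A), (1 : K)) (a, 0) (0, 1)
      simp [muC_apply] at h
      linear_combination (norm := module) h.1
    · -- FN10
      intro a
      have h := hN2 ((0 : A), (1 : K)) (a, 0) (0, 1)
      simp [muC_apply] at h
      linear_combination h.2
    · -- TD1
      intro a b
      have h := hBJ ((0 : A), (1 : K)) (a, 0) (b, 0)
      simp [betaC_apply] at h
      linear_combination h.2
    · -- TD2
      intro a b
      have h := hBJ ((0 : A), (1 : K)) (a, 0) (b, 0)
      simp [betaC_apply] at h
      linear_combination (norm := module) h.1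
    · -- GF1
      intro a b
      have h := hBC ((a, 0) : A × K) (b, 0) (0, 1)
      simp [muC_apply, betaC_apply] at h
      linear_combination (norm := module) h.1
    · -- GF2
      intro a b
      have h := hBC ((a, 0) : A × K) (b, 0) (0, 1)
      simp [muC_apply, betaC_apply] at h
      linear_combination h.2
    · -- GF3
      intro a b
      have h := hBC ((a, 0) : A × K) (0, 1) (b, 0)
      simp [muC_apply, betaC_apply] at h
      linear_combination (norm := module) h.1
    · -- GF4
      intro a b
      have h := hBC ((a, 0) : A × K) (0, 1) (b, 0)
      simp [muC_apply, betaC_apply] at h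
      linear_combination -h.2
    · -- GF5
      intro a
      have h := hBC ((a, 0) : A × K) (0, 1) (0, 1)
      simp [muC_apply, betaC_apply] at h
      linear_combination (norm := module) h.1
    · -- GF6
      intro a
      have h := hBC ((a, 0) : A × K) (0, 1) (0, 1)
      simp [muC_apply, betaC_apply] at h
      linear_combination h.2
  · rintro ⟨hFN1a, hFN1b, hFN2, hFN3, hFN4, hFN5, hFN6, hFN7, hFN8, hFN9, hFN10,
      hTD1, hTD2, hG1, hG2, hG3, hG4, hG5, hG6⟩
    have keyN2 : ∀ P Q R : A × K,
        muC circ d (muC circ d P Q) R - muC circ d (muC circ d P R) Q = 0 := by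
      apply tri_reduce
      · intros; simp only [map_add, map_smul, LinearMap.add_apply, LinearMap.smul_apply]; module
      · intros; simp only [map_add, map_smul, LinearMap.add_apply, LinearMap.smul_apply]; module
      · intros; simp only [map_add, map_smul, LinearMap.add_apply, LinearMap.smul_apply]; module
      · intros; simp only [map_add, map_smul, LinearMap.add_apply, LinearMap.smul_apply]; module
      · intros; simp only [map_add, map_smul, LinearMap.add_apply, LinearMap.smul_apply]; module
      · intros; simp only [map_add, map_smul, LinearMap.add_apply, LinearMap.smul_apply]; module
      · intro a b c
        refine Prod.ext ?_ ?_ <;> simp [muC_apply]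
        linear_combination (norm := module) hA2' a b c
      · intro a b
        refine Prod.ext ?_ ?_ <;> simp [muC_apply]
        · linear_combination (norm := module) hFN7 a b
        · linear_combination hFN8 a b
      · intro a c
        refine Prod.ext ?_ ?_ <;> simp [muC_apply]
        · linear_combination (norm := module) (-1 : K) • hFN7 a c
        · linear_combination -hFN8 a c
      · intro a; exact sub_self _
      · intro b c
        refine Prod.ext ?_ ?_ <;> simp [muC_apply]
        · linear_combination (norm := module) hFN6 b c
        · ring
      · intro b
        refine Prod.ext ?_ ?_ <;> simp [muC_apply]
        · linear_combination (norm := module) hFN9 b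
        · linear_combination hFN10 b
      · intro c
        refine Prod.ext ?_ ?_ <;> simp [muC_apply]
        · linear_combination (norm := module) (-1 : K) • hFN9 c
        · linear_combination -hFN10 c
      · exact sub_self _
    have keyN1 : ∀ P Q R : A × K,
        (muC circ d (muC circ d P Q) R - muC circ d P (muC circ d Q R))
          - (muC circ d (muC circ d Q P) R - muC circ d Q (muC circ d P R)) = 0 := by
      apply tri_reduce
      · intros; simp only [map_add, map_smul, LinearMap.add_apply, LinearMap.smul_apply]; module
      · intros; simp only [map_add, map_smul, LinearMap.add_apply, LinearMap.smul_apply]; module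
      · intros; simp only [map_add, map_smul, LinearMap.add_apply, LinearMap.smul_apply]; module
      · intros; simp only [map_add, map_smul, LinearMap.add_apply, LinearMap.smul_apply]; module
      · intros; simp only [map_add, map_smul, LinearMap.add_apply, LinearMap.smul_apply]; module
      · intros; simp only [map_add, map_smul, LinearMap.add_apply, LinearMap.smul_apply]; module
      · intro a b c
        refine Prod.ext ?_ ?_ <;> simp [muC_apply]
        linear_combination (norm := module) hA1' a b c
      · intro a b
        refine Prod.ext ?_ ?_ <;> simp [muC_apply]
        · linear_combination (norm := module) hFN3 a b
        · linear_combination hFN1a a b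
      · intro a c
        refine Prod.ext ?_ ?_ <;> simp [muC_apply]
        · linear_combination (norm := module) hFN2 a c
        · linear_combination hFN1b a c
      · intro a
        refine Prod.ext ?_ ?_ <;> simp [muC_apply]
        · linear_combination (norm := module) hFN4 a
        · linear_combination -hFN5 a
      · intro b c
        refine Prod.ext ?_ ?_ <;> simp [muC_apply]
        · linear_combination (norm := module) (-1 : K) • hFN2 b c
        · linear_combination -hFN1b b c
      · intro b
        refine Prod.ext ?_ ?_ <;> simp [muC_apply]
        · linear_combination (norm := module) (-1 : K) • hFN4 b
        · linear_combination hFN5 b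
      · intro c; exact sub_self _
      · exact sub_self _
    have keyJ : ∀ P Q R : A × K,
        betaC brk d P (betaC brk d Q R)
          - (betaC brk d (betaC brk d P Q) R + betaC brk d Q (betaC brk d P R)) = 0 := by
      apply tri_reduce
      · intros; simp only [map_add, map_smul, LinearMap.add_apply, LinearMap.smul_apply]; module
      · intros; simp only [map_add, map_smul, LinearMap.add_apply, LinearMap.smul_apply]; module
      · intros; simp only [map_add, map_smul, LinearMap.add_apply, LinearMap.smul_apply]; module
      · intros; simp only [map_add, map_smul, LinearMap.add_apply, LinearMap.smul_apply]; module
      · intros; simp only [map_add, map_smul, LinearMap.add_apply, LinearMap.smul_apply]; module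
      · intros; simp only [map_add, map_smul, LinearMap.add_apply, LinearMap.smul_apply]; module
      · intro a b c
        refine Prod.ext ?_ ?_ <;> simp [betaC_apply]
        linear_combination (norm := module) hJ' a b c
      · intro a b
        refine Prod.ext ?_ ?_ <;> simp [betaC_apply]
        · linear_combination (norm := module) hTD2 a b + hskew b (d.D a)
        · linear_combination hTD1 a b
      · intro a c
        refine Prod.ext ?_ ?_ <;> simp [betaC_apply]
        · linear_combination (norm := module) (-1 : K) • hTD2 a c
        · linear_combination -hTD1 a c
      · intro a
        refine Prod.ext ?_ ?_ <;> simp [betaC_apply]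
      · intro b c
        refine Prod.ext ?_ ?_ <;> simp [betaC_apply]
        · linear_combination (norm := module) hTD2 b c
        · linear_combination hTD1 b c
      · intro b
        refine Prod.ext ?_ ?_ <;> simp [betaC_apply]
      · intro c
        refine Prod.ext ?_ ?_ <;> simp [betaC_apply]
      · refine Prod.ext ?_ ?_ <;> simp [betaC_apply]
    have keyC : ∀ P Q R : A × K,
        betaC brk d P (muC circ d Q R) - betaC brk d R (muC circ d Q P)
          + muC circ d (betaC brk d Q P) R - muC circ d (betaC brk d Q R) P
          - muC circ d Q (betaC brk d P R) = 0 := by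
      apply tri_reduce
      · intros; simp only [map_add, map_smul, LinearMap.add_apply, LinearMap.smul_apply]; module
      · intros; simp only [map_add, map_smul, LinearMap.add_apply, LinearMap.smul_apply]; module
      · intros; simp only [map_add, map_smul, LinearMap.add_apply, LinearMap.smul_apply]; module
      · intros; simp only [map_add, map_smul, LinearMap.add_apply, LinearMap.smul_apply]; module
      · intros; simp only [map_add, map_smul, LinearMap.add_apply, LinearMap.smul_apply]; module
      · intros; simp only [map_add, map_smul, LinearMap.add_apply, LinearMap.smul_apply]; module
      · intro a b c
        refine Prod.ext ?_ ?_ <;> simp [muC_apply, betaC_apply]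
        linear_combination (norm := module) hCmp' a b c
      · intro a b
        refine Prod.ext ?_ ?_ <;> simp [muC_apply, betaC_apply]
        · linear_combination (norm := module) hG1 a b
        · linear_combination hG2 a b
      · intro a c
        refine Prod.ext ?_ ?_ <;> simp [muC_apply, betaC_apply]
        · linear_combination (norm := module) hG3 a c
        · linear_combination -hG4 a c
      · intro a
        refine Prod.ext ?_ ?_ <;> simp [muC_apply, betaC_apply]
        · linear_combination (norm := module) hG5 a
        · linear_combination hG6 a
      · intro b c
        refine Prod.ext ?_ ?_ <;> simp [muC_apply, betaC_apply]
        · linear_combination (norm := module) (-1 : K) • hG1 c b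
        · linear_combination -hG2 c b
      · intro b
        refine Prod.ext ?_ ?_ <;> simp [muC_apply, betaC_apply]
      · intro c
        refine Prod.ext ?_ ?_ <;> simp [muC_apply, betaC_apply]
        · linear_combination (norm := module) (-1 : K) • hG5 c
        · linear_combination -hG6 c
      · refine Prod.ext ?_ ?_ <;> simp [muC_apply, betaC_apply]
    refine ⟨⟨fun P Q R => ?_, fun P Q R => ?_⟩, ⟨fun P => ?_, fun P Q R => ?_⟩, fun P Q R => ?_⟩
    · linear_combination (norm := module) keyN1 P Q R
    · exact sub_eq_zero.mp (keyN2 P Q R)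
    · obtain ⟨a, s⟩ := P
      refine Prod.ext ?_ ?_ <;> simp [betaC_apply, hJ0']
    · exact sub_eq_zero.mp (keyJ P Q R)
    · exact keyC P Q R

end CoordIff

end GDExt
namespace GDExt

section Transfer

variable {M N : Type*} [AddCommGroup M] [AddCommGroup N]

lemma isGD_map (φ : M ≃+ N) (m1 b1 : M → M → M) (m2 b2 : N → N → N)
    (hm : ∀ a b, φ (m1 a b) = m2 (φ a) (φ b)) (hb : ∀ a b, φ (b1 a b) = b2 (φ a) (φ b)) :
    IsGD m1 b1 → IsGD m2 b2 := by
  rintro ⟨⟨hN1, hN2⟩, ⟨hL1, hL2⟩, hC⟩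
  refine ⟨⟨fun a b c => ?_, fun a b c => ?_⟩, ⟨fun a => ?_, fun a b c => ?_⟩, fun a b c => ?_⟩
  · obtain ⟨a, rfl⟩ := φ.surjective a
    obtain ⟨b, rfl⟩ := φ.surjective b
    obtain ⟨c, rfl⟩ := φ.surjective c
    simp only [← hm, ← map_sub]
    exact congrArg φ (hN1 a b c)
  · obtain ⟨a, rfl⟩ := φ.surjective a
    obtain ⟨b, rfl⟩ := φ.surjective b
    obtain ⟨c, rfl⟩ := φ.surjective c
    simp only [← hm]
    exact congrArg φ (hN2 a b c)
  · obtain ⟨a, rfl⟩ := φ.surjective a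
    rw [← hb, hL1 a, map_zero]
  · obtain ⟨a, rfl⟩ := φ.surjective a
    obtain ⟨b, rfl⟩ := φ.surjective b
    obtain ⟨c, rfl⟩ := φ.surjective c
    simp only [← hb, ← map_add]
    exact congrArg φ (hL2 a b c)
  · obtain ⟨a, rfl⟩ := φ.surjective a
    obtain ⟨b, rfl⟩ := φ.surjective b
    obtain ⟨c, rfl⟩ := φ.surjective c
    simp only [← hm, ← hb, ← map_sub, ← map_add]
    rw [hC a b c, map_zero]

lemma isGD_transfer (φ : M ≃+ N) (m1 b1 : M → M → M) (m2 b2 : N → N → N)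
    (hm : ∀ a b, φ (m1 a b) = m2 (φ a) (φ b)) (hb : ∀ a b, φ (b1 a b) = b2 (φ a) (φ b)) :
    IsGD m1 b1 ↔ IsGD m2 b2 := by
  refine ⟨isGD_map φ m1 b1 m2 b2 hm hb, isGD_map φ.symm m2 b2 m1 b1 ?_ ?_⟩ <;>
    intro a b <;> apply φ.injective <;>
      simp only [AddEquiv.apply_symm_apply, hm, hb]

end Transfer

section OneDim

variable {K : Type*} [Field K] {A : Type*} [AddCommGroup A] [Module K A]
variable {V : Type*} [AddCommGroup V] [Module K V]
variable (x : V) (hx : ∀ v : V, ∃! c : K, v = c • x)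

/-- The coordinate functional of the one-dimensional space `V` with basis `x`. -/
noncomputable def coordL : V →ₗ[K] K where
  toFun v := (hx v).choose
  map_add' u v := by
    have h : u + v = ((hx u).choose + (hx v).choose) • x := by
      rw [add_smul, ← (hx u).choose_spec.1, ← (hx v).choose_spec.1]
    exact ((hx (u + v)).choose_spec.2 _ h).symm
  map_smul' c v := by
    simp only [RingHom.id_apply, smul_eq_mul]
    have h : c • v = (c * (hx v).choose) • x := by
      rw [mul_smul, ← (hx v).choose_spec.1]
    exact ((hx (c • v)).choose_spec.2 _ h).symm

lemma coordL_smul (v : V) : coordL x hx v • x = v := ((hx v).choose_spec.1).symm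

lemma coordL_of_smul (s : K) : coordL x hx (s • x) = s :=
  ((hx (s • x)).choose_spec.2 s rfl).symm

lemma coordL_x : coordL x hx x = 1 := by
  have h := coordL_of_smul x hx 1
  rwa [one_smul] at h

include hx in
lemma vext {M : Type*} [AddCommGroup M] [Module K M] {g h : V →ₗ[K] M}
    (H : g x = h x) : g = h := by
  ext v
  conv_lhs => rw [← coordL_smul x hx v]
  conv_rhs => rw [← coordL_smul x hx v]
  rw [map_smul, map_smul, H]

/-- `V` is linearly equivalent to `K` via the basis `x`. -/
noncomputable def psi : V ≃ₗ[K] K :=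
  LinearEquiv.ofLinear (coordL x hx) (LinearMap.toSpanSingleton K V x)
    (by ext; simp [LinearMap.toSpanSingleton_apply, coordL_of_smul, coordL_x])
    (by ext v; simp [LinearMap.toSpanSingleton_apply, coordL_smul])

/-- `A × V ≃ A × K`. -/
noncomputable def phiE : (A × V) ≃ₗ[K] (A × K) :=
  (LinearEquiv.refl K A).prodCongr (psi x hx)

lemma phiE_apply (P : A × V) : phiE x hx P = (P.1, coordL x hx P.2) := rfl

/-- The extending datum associated to a flag datum. -/
noncomputable def mkE (d : FlagData K A) : ExtDatum K A V where
  lA := d.p.smulRight (LinearMap.id : V →ₗ[K] V)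
  rA := d.q.smulRight (LinearMap.id : V →ₗ[K] V)
  lV := (coordL x hx).smulRight d.S
  rV := (coordL x hx).smulRight d.T
  f := (coordL x hx).smulRight ((coordL x hx).smulRight d.a1)
  st := (coordL x hx).smulRight ((coordL x hx).smulRight (d.k • x))
  tl := (coordL x hx).smulRight (d.eta.smulRight x)
  tr := (coordL x hx).smulRight d.D
  hm := 0
  vbr := 0

lemma mkE_mulMap (circ : A →ₗ[K] A →ₗ[K] A) (d : FlagData K A) (P Q : A × V) :
    phiE x hx ((mkE x hx d).mulMap circ P Q) = muC circ d (phiE x hx P) (phiE x hx Q) := by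
  obtain ⟨a, u⟩ := P
  obtain ⟨b, v⟩ := Q
  refine Prod.ext ?_ ?_ <;>
    simp [ExtDatum.mulMap, uniMul, mkE, muC_apply, phiE_apply, map_add, map_smul,
      coordL_of_smul, smul_smul, LinearMap.smulRight_apply, coordL_x, mul_comm, mul_left_comm]

lemma mkE_brMap (brk : A →ₗ[K] A →ₗ[K] A) (d : FlagData K A) (P Q : A × V) :
    phiE x hx ((mkE x hx d).brMap brk P Q) = betaC brk d (phiE x hx P) (phiE x hx Q) := by
  obtain ⟨a, u⟩ := P
  obtain ⟨b, v⟩ := Q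
  refine Prod.ext ?_ ?_ <;>
    simp [ExtDatum.brMap, uniBr, mkE, betaC_apply, phiE_apply, map_add, map_sub, map_smul,
      coordL_of_smul, smul_smul, LinearMap.smulRight_apply, coordL_x, mul_comm, mul_left_comm]

/-- The flag datum associated to an extending datum. -/
noncomputable def flagOf (e : ExtDatum K A V) : FlagData K A where
  p :=
    { toFun := fun a => coordL x hx (e.lA a x)
      map_add' := by intro a b; simp
      map_smul' := by intro c a; simp }
  q :=
    { toFun := fun a => coordL x hx (e.rA a x)
      map_add' := by intro a b; simp
      map_smul' := by intro c a; simp }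
  S := e.lV x
  T := e.rV x
  a1 := e.f x x
  k := coordL x hx (e.st x x)
  eta :=
    { toFun := fun a => coordL x hx (e.tl x a)
      map_add' := by intro a b; simp
      map_smul' := by intro c a; simp }
  D := e.tr x

lemma extDatum_ext {e e' : ExtDatum K A V} (h1 : e.lA = e'.lA) (h2 : e.rA = e'.rA)
    (h3 : e.lV = e'.lV) (h4 : e.rV = e'.rV) (h5 : e.f = e'.f) (h6 : e.st = e'.st)
    (h7 : e.tl = e'.tl) (h8 : e.tr = e'.tr) (h9 : e.hm = e'.hm) (h10 : e.vbr = e'.vbr) :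
    e = e' := by
  cases e; cases e'
  simp only [ExtDatum.mk.injEq]
  exact ⟨h1, h2, h3, h4, h5, h6, h7, h8, h9, h10⟩

lemma flagData_ext {d d' : FlagData K A} (h1 : d.p = d'.p) (h2 : d.q = d'.q)
    (h3 : d.S = d'.S) (h4 : d.T = d'.T) (h5 : d.a1 = d'.a1) (h6 : d.k = d'.k)
    (h7 : d.eta = d'.eta) (h8 : d.D = d'.D) : d = d' := by
  cases d; cases d'
  simp only [FlagData.mk.injEq]
  exact ⟨h1, h2, h3, h4, h5, h6, h7, h8⟩

lemma diag_zero (circ brk : A →ₗ[K] A →ₗ[K] A) (e : ExtDatum K A V)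
    (he : IsGD (e.mulMap circ) (e.brMap brk)) : e.hm x x = 0 ∧ e.vbr x x = 0 := by
  have h := he.2.1.1 ((0 : A), x)
  simp [ExtDatum.brMap, uniBr, Prod.ext_iff] at h
  exact h

lemma mkE_flagOf (e : ExtDatum K A V) (hhm : e.hm x x = 0) (hvbr : e.vbr x x = 0) :
    mkE x hx (flagOf x hx e) = e := by
  refine extDatum_ext ?_ ?_ ?_ ?_ ?_ ?_ ?_ ?_ ?_ ?_
  · refine LinearMap.ext fun a => vext x hx ?_
    simp [mkE, flagOf, coordL_smul]
  · refine LinearMap.ext fun a => vext x hx ?_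
    simp [mkE, flagOf, coordL_smul]
  · refine vext x hx ?_
    simp [mkE, flagOf, coordL_x]
  · refine vext x hx ?_
    simp [mkE, flagOf, coordL_x]
  · refine vext x hx (vext x hx ?_)
    simp [mkE, flagOf, coordL_x]
  · refine vext x hx (vext x hx ?_)
    simp [mkE, flagOf, coordL_x, coordL_smul]
  · refine vext x hx (LinearMap.ext fun a => ?_)
    simp [mkE, flagOf, coordL_x, coordL_smul]
  · refine vext x hx ?_
    simp [mkE, flagOf, coordL_x]
  · refine (vext x hx (vext x hx ?_)).symm
    simp [mkE, hhm]
  · refine (vext x hx (vext x hx ?_)).symm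
    simp [mkE, hvbr]

lemma flagOf_mkE (d : FlagData K A) : flagOf x hx (mkE x hx d) = d := by
  refine flagData_ext ?_ ?_ ?_ ?_ ?_ ?_ ?_ ?_
  · refine LinearMap.ext fun a => ?_
    simp [mkE, flagOf, coordL_of_smul, coordL_x]
  · refine LinearMap.ext fun a => ?_
    simp [mkE, flagOf, coordL_of_smul, coordL_x]
  · simp [mkE, flagOf, coordL_x]
  · simp [mkE, flagOf, coordL_x]
  · simp [mkE, flagOf, coordL_x]
  · simp [mkE, flagOf, coordL_x, coordL_of_smul]
  · refine LinearMap.ext fun a => ?_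
    simp [mkE, flagOf, coordL_x, coordL_of_smul]
  · simp [mkE, flagOf, coordL_x]

end OneDim

end GDExt
namespace GDExt

/-- Proposition 4.2: for `V` one-dimensional with basis `{x}`, GD extending
structures of `A` by `V` correspond bijectively to GD flag datums of `A`, via the
indicated formulas. -/
theorem flag_datum_bijection_dim_one
    {K A V : Type*} [Field K] [AddCommGroup A] [Module K A] [AddCommGroup V] [Module K V]
    (circ brk : A →ₗ[K] A →ₗ[K] A)
    (hGD : IsGD (fun a b => circ a b) (fun a b => brk a b))
    (x : V) (hx : ∀ v : V, ∃! c : K, v = c • x) :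
    ∃ Φ : {d : FlagData K A // IsFlagDatum circ brk d}
        → {e : ExtDatum K A V // IsGD (e.mulMap circ) (e.brMap brk)},
      Function.Bijective Φ ∧
      ∀ d : {d : FlagData K A // IsFlagDatum circ brk d},
        (∀ a : A, (Φ d).1.lA a x = d.1.p a • x) ∧
        (∀ a : A, (Φ d).1.rA a x = d.1.q a • x) ∧
        (∀ a : A, (Φ d).1.lV x a = d.1.S a) ∧
        (∀ a : A, (Φ d).1.rV x a = d.1.T a) ∧
        ((Φ d).1.f x x = d.1.a1) ∧
        ((Φ d).1.st x x = d.1.k • x) ∧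
        (∀ a : A, (Φ d).1.tl x a = d.1.eta a • x) ∧
        (∀ a : A, (Φ d).1.tr x a = d.1.D a) ∧
        ((Φ d).1.hm = 0) ∧
        ((Φ d).1.vbr = 0) := by
  classical
  have key : ∀ d : FlagData K A,
      IsGD ((mkE x hx d).mulMap circ) ((mkE x hx d).brMap brk) ↔ IsFlagDatum circ brk d := by
    intro d
    refine Iff.trans ?_ (coord_iff circ brk hGD d)
    exact isGD_transfer (phiE x hx).toAddEquiv ((mkE x hx d).mulMap circ)
      ((mkE x hx d).brMap brk) (fun P Q => muC circ d P Q) (fun P Q => betaC brk d P Q)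
      (fun P Q => mkE_mulMap x hx circ d P Q) (fun P Q => mkE_brMap x hx brk d P Q)
  refine ⟨fun dd => ⟨mkE x hx dd.1, (key dd.1).mpr dd.2⟩, ?_, ?_⟩
  · rw [Function.bijective_iff_has_inverse]
    refine ⟨fun ee => ⟨flagOf x hx ee.1, (key _).mp ?_⟩, fun dd => Subtype.ext ?_,
      fun ee => Subtype.ext ?_⟩
    · rw [mkE_flagOf x hx ee.1 (diag_zero x circ brk ee.1 ee.2).1
        (diag_zero x circ brk ee.1 ee.2).2]
      exact ee.2
    · exact flagOf_mkE x hx dd.1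
    · exact mkE_flagOf x hx ee.1 (diag_zero x circ brk ee.1 ee.2).1
        (diag_zero x circ brk ee.1 ee.2).2
  · intro dd
    refine ⟨fun a => ?_, fun a => ?_, fun a => ?_, fun a => ?_, ?_, ?_, fun a => ?_,
      fun a => ?_, rfl, rfl⟩ <;>
      simp [mkE, coordL_x, LinearMap.smulRight_apply]

end GDExt
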